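/- If R is a standard balanced tableau in which entries i and i+1 lie in different rows and different columns with i strictly above i+1, then exchanging i and i+1 yields a standard balanced tableau R' with inv(R') = inv(R) − 1. -/
import Mathlib


/-- The Coxeter length of `w`: the number of inversion pairs. -/
def invCount {n : ℕ} (w : Equiv.Perm (Fin n)) : ℕ :=
  (Finset.univ.filter fun p : Fin n × Fin n => p.1 < p.2 ∧ w p.2 < w p.1).card

/-- The Rothe diagram of `w` (0-indexed): the cells `(i, w j)` for inversions `i < j`,
`w j < w i`, as a subset of `ℕ × ℕ` (first coordinate the row, drawn with row `0` at the
bottom so that "above" means larger first coordinate; second coordinate the column). -/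
def RotheD (n : ℕ) (w : Equiv.Perm (Fin n)) : Finset (ℕ × ℕ) :=
  (Finset.univ.filter fun p : Fin n × Fin n => p.1 < p.2 ∧ w p.2 < w p.1).image
    fun p => ((p.1 : ℕ), (w p.2 : ℕ))

/-- A standard balanced tableau on a diagram `D`: a bijective filling of the cells of `D`
by `1, …, |D|` such that for every cell, the number of larger entries to its right in its
row equals the number of smaller entries above it in its column. -/
def IsSBT (D : Finset (ℕ × ℕ)) (T : ℕ × ℕ → ℕ) : Prop :=
  Set.InjOn T ↑D ∧ D.image T = Finset.Icc 1 D.card ∧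
  ∀ x ∈ D, (D.filter fun y => y.1 = x.1 ∧ x.2 < y.2 ∧ T x < T y).card
    = (D.filter fun y => y.2 = x.2 ∧ x.1 < y.1 ∧ T y < T x).card

/-- The inversion number of a tableau on `D`: the number of pairs of entries `i < j`
with `i` in a strictly higher row and a different column than `j`. -/
def invT (D : Finset (ℕ × ℕ)) (T : ℕ × ℕ → ℕ) : ℕ :=
  ((D ×ˢ D).filter fun p => T p.1 < T p.2 ∧ p.2.1 < p.1.1 ∧ p.1.2 ≠ p.2.2).card

/-- Exchanging entries `i` and `i+1` lying in different rows and different columns with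
`i` strictly above `i+1` yields a standard balanced tableau with one fewer inversion. -/
theorem commutation_decreases_invT (n : ℕ) (w : Equiv.Perm (Fin n))
    (T : ℕ × ℕ → ℕ) (i : ℕ) (hT : IsSBT (RotheD n w) T)
    (x y : ℕ × ℕ) (hx : x ∈ RotheD n w) (hy : y ∈ RotheD n w)
    (hTx : T x = i) (hTy : T y = i + 1)
    (habove : y.1 < x.1) (hcol : x.2 ≠ y.2) :
    IsSBT (RotheD n w)
        (fun z => if T z = i then i + 1 else if T z = i + 1 then i else T z) ∧
      invT (RotheD n w)
          (fun z => if T z = i then i + 1 else if T z = i + 1 then i else T z) + 1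
        = invT (RotheD n w) T := by
  obtain ⟨hinj, himg, hbal⟩ := hT
  set D := RotheD n w with hD
  set T' : ℕ × ℕ → ℕ := fun z => if T z = i then i + 1 else if T z = i + 1 then i else T z
    with hT'
  have hux : ∀ z ∈ D, T z = i → z = x := fun z hz h => hinj hz hx (by rw [h, hTx])
  have huy : ∀ z ∈ D, T z = i + 1 → z = y := fun z hz h => hinj hz hy (by rw [h, hTy])
  have hT'x : T' x = i + 1 := by simp only [hT', hTx]; split_ifs <;> omega
  have hT'y : T' y = i := by simp only [hT', hTy]; split_ifs <;> omega
  have cmp : ∀ a b : ℕ, ¬(a = i ∧ b = i + 1) → ¬(a = i + 1 ∧ b = i) →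
      ((if a = i then i + 1 else if a = i + 1 then i else a) <
        (if b = i then i + 1 else if b = i + 1 then i else b) ↔ a < b) := by
    intro a b h1 h2; split_ifs <;> omega
  have cmpD : ∀ z ∈ D, ∀ u ∈ D, ¬(z = x ∧ u = y) → ¬(z = y ∧ u = x) →
      (T' z < T' u ↔ T z < T u) := by
    intro z hz u hu h1 h2
    refine cmp _ _ ?_ ?_
    · rintro ⟨ha, hb⟩; exact h1 ⟨hux z hz ha, huy u hu hb⟩
    · rintro ⟨ha, hb⟩; exact h2 ⟨huy z hz ha, hux u hu hb⟩
  have hiI : i ∈ Finset.Icc 1 D.card := himg ▸ Finset.mem_image.mpr ⟨x, hx, hTx⟩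
  have hi1I : i + 1 ∈ Finset.Icc 1 D.card := himg ▸ Finset.mem_image.mpr ⟨y, hy, hTy⟩
  constructor
  · refine ⟨?_, ?_, ?_⟩
    · intro a ha b hb hab
      apply hinj ha hb
      simp only [hT'] at hab
      split_ifs at hab <;> omega
    · have h1 : D.image T' = (D.image T).image
          (fun v => if v = i then i + 1 else if v = i + 1 then i else v) := by
        rw [Finset.image_image]; rfl
      rw [h1, himg]
      ext v
      simp only [Finset.mem_image]
      constructor
      · rintro ⟨u, hu, rfl⟩
        simp only [Finset.mem_Icc] at *
        split_ifs <;> omega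
      · intro hv
        by_cases h1 : v = i
        · exact ⟨i + 1, hi1I, by split_ifs <;> omega⟩
        · by_cases h2 : v = i + 1
          · exact ⟨i, hiI, by split_ifs <;> omega⟩
          · exact ⟨v, hv, by split_ifs <;> omega⟩
    · intro z hz
      have hrow : (D.filter fun u => u.1 = z.1 ∧ z.2 < u.2 ∧ T' z < T' u)
          = D.filter fun u => u.1 = z.1 ∧ z.2 < u.2 ∧ T z < T u := by
        apply Finset.filter_congr
        intro u hu
        by_cases hr : u.1 = z.1
        · have h := cmpD z hz u hu (by rintro ⟨rfl, rfl⟩; omega)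
            (by rintro ⟨rfl, rfl⟩; omega)
          rw [h]
        · tauto
      have hcolf : (D.filter fun u => u.2 = z.2 ∧ z.1 < u.1 ∧ T' u < T' z)
          = D.filter fun u => u.2 = z.2 ∧ z.1 < u.1 ∧ T u < T z := by
        apply Finset.filter_congr
        intro u hu
        by_cases hr : u.2 = z.2
        · have h := cmpD u hu z hz (by rintro ⟨rfl, rfl⟩; omega)
            (by rintro ⟨rfl, rfl⟩; omega)
          rw [h]
        · tauto
      rw [hrow, hcolf]
      exact hbal z hz
  · unfold invT
    have hmem : (x, y) ∈ (D ×ˢ D).filter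
        (fun p => T p.1 < T p.2 ∧ p.2.1 < p.1.1 ∧ p.1.2 ≠ p.2.2) :=
      Finset.mem_filter.mpr ⟨Finset.mem_product.mpr ⟨hx, hy⟩,
        by rw [hTx, hTy]; omega, habove, hcol⟩
    have heq : (D ×ˢ D).filter (fun p => T' p.1 < T' p.2 ∧ p.2.1 < p.1.1 ∧ p.1.2 ≠ p.2.2)
        = ((D ×ˢ D).filter
            (fun p => T p.1 < T p.2 ∧ p.2.1 < p.1.1 ∧ p.1.2 ≠ p.2.2)).erase (x, y) := by
      ext p
      simp only [Finset.mem_erase, Finset.mem_filter, Finset.mem_product]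
      constructor
      · rintro ⟨⟨hp1, hp2⟩, hlt, hab, hne⟩
        have hne1 : ¬(p.1 = x ∧ p.2 = y) := by
          rintro ⟨h1, h2⟩
          rw [h1, h2, hT'x, hT'y] at hlt; omega
        have hne2 : ¬(p.1 = y ∧ p.2 = x) := by
          rintro ⟨h1, h2⟩
          rw [h1, h2] at hab; omega
        refine ⟨?_, ⟨hp1, hp2⟩, ?_, hab, hne⟩
        · intro h
          exact hne1 ⟨by rw [h], by rw [h]⟩
        · exact (cmpD p.1 hp1 p.2 hp2 hne1 hne2).mp hlt
      · rintro ⟨hpne, ⟨hp1, hp2⟩, hlt, hab, hne⟩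
        have hne1 : ¬(p.1 = x ∧ p.2 = y) := by
          rintro ⟨h1, h2⟩
          exact hpne (Prod.ext h1 h2)
        have hne2 : ¬(p.1 = y ∧ p.2 = x) := by
          rintro ⟨h1, h2⟩
          rw [h1, h2] at hab; omega
        exact ⟨⟨hp1, hp2⟩, (cmpD p.1 hp1 p.2 hp2 hne1 hne2).mpr hlt, hab, hne⟩
    rw [heq]
    exact Finset.card_erase_add_one hmem
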